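/- The limit as φ → kπ/(hN) of sin(φhN) sin(φh/2) / (cos(kπ/N) − cos(φh)) equals (-1)^k N / (2 cos(kπ/(2N))), for any integer k with 1 ≤ k ≤ N−1 and h > 0. -/

import Mathlib

open Real Filter Topology

theorem limit_removable_singularity (h : ℝ) (hh : 0 < h) (N k : ℕ)
    (hk1 : 1 ≤ k) (hkN : k ≤ N - 1) (hN : 1 ≤ N) :
    Filter.Tendsto
      (fun φ : ℝ => Real.sin (φ * h * N) * Real.sin (φ * h / 2) /
        (Real.cos (k * π / N) - Real.cos (φ * h)))
      (𝓝[≠] (k * π / (h * N)))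
      (𝓝 ((-1 : ℝ) ^ k * N / (2 * Real.cos (k * π / (2 * N))))) := by
  have hh0 : h ≠ 0 := ne_of_gt hh
  have hNpos : (0:ℝ) < N := by exact_mod_cast Nat.lt_of_lt_of_le Nat.zero_lt_one hN
  have hN0 : (N:ℝ) ≠ 0 := ne_of_gt hNpos
  have hkN' : k < N := by omega
  have hkpos : (0:ℝ) < k := by exact_mod_cast hk1
  have hkltN : (k:ℝ) < N := by exact_mod_cast hkN'
  -- angles
  set a : ℝ := k * π / (h * N) with ha
  have hahN : a * h * N = k * π := by
    rw [ha, div_mul_eq_mul_div, div_mul_eq_mul_div, div_eq_iff (by positivity)]; ring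
  have hah : a * h = k * π / N := by
    rw [ha, div_mul_eq_mul_div, div_eq_div_iff (by positivity) (by positivity)]; ring
  have hah2 : a * h / 2 = k * π / (2 * N) := by rw [hah]; ring
  have hc1 : 0 < (k:ℝ) * π / N := by positivity
  have hc2 : (k:ℝ) * π / N < π := by
    rw [div_lt_iff₀ hNpos]
    nlinarith [Real.pi_pos]
  have hsinc : 0 < Real.sin ((k:ℝ) * π / N) := Real.sin_pos_of_pos_of_lt_pi hc1 hc2
  have hd1 : 0 < (k:ℝ) * π / (2 * N) := by positivity
  have hd2 : (k:ℝ) * π / (2 * N) < π / 2 := by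
    rw [div_lt_div_iff₀ (by positivity) two_pos]
    nlinarith [Real.pi_pos]
  have hcosd : 0 < Real.cos ((k:ℝ) * π / (2 * N)) :=
    Real.cos_pos_of_mem_Ioo ⟨by linarith [Real.pi_pos], hd2⟩
  have hsind : 0 < Real.sin ((k:ℝ) * π / (2 * N)) :=
    Real.sin_pos_of_pos_of_lt_pi hd1 (by linarith [Real.pi_pos])
  have hcoskpi : Real.cos ((k:ℝ) * π) = (-1) ^ k := by
    simpa using Real.cos_nat_mul_pi_sub 0 k
  -- derivatives
  have hu : HasDerivAt (fun φ : ℝ => φ * h * N) (h * N) a := by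
    simpa using ((hasDerivAt_id a).mul_const h).mul_const (N:ℝ)
  have hv : HasDerivAt (fun φ : ℝ => φ * h) h a := by
    simpa using (hasDerivAt_id a).mul_const h
  have hv2 : HasDerivAt (fun φ : ℝ => φ * h / 2) (h / 2) a :=
    hv.div_const 2
  have hs1 : HasDerivAt (fun φ : ℝ => Real.sin (φ * h * N))
      (Real.cos (a * h * N) * (h * N)) a := (Real.hasDerivAt_sin _).comp a hu
  have hs2 : HasDerivAt (fun φ : ℝ => Real.sin (φ * h / 2))
      (Real.cos (a * h / 2) * (h / 2)) a := (Real.hasDerivAt_sin _).comp a hv2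
  have hf : HasDerivAt (fun φ : ℝ => Real.sin (φ * h * N) * Real.sin (φ * h / 2))
      ((-1)^k * (h * N) * Real.sin ((k:ℝ) * π / (2 * N))) a := by
    have := hs1.mul hs2
    rw [hahN, hah2, hcoskpi, Real.sin_nat_mul_pi] at this
    exact this.congr_deriv (by ring)
  have hg : HasDerivAt (fun φ : ℝ => Real.cos ((k:ℝ) * π / N) - Real.cos (φ * h))
      (Real.sin ((k:ℝ) * π / N) * h) a := by
    have := (hasDerivAt_const a (Real.cos ((k:ℝ) * π / N))).sub
      ((Real.hasDerivAt_cos _).comp a hv)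
    rw [hah] at this
    exact this.congr_deriv (by ring)
  have hg' : Real.sin ((k:ℝ) * π / N) * h ≠ 0 := by positivity
  have Hf := hasDerivAt_iff_tendsto_slope.mp hf
  have Hg := hasDerivAt_iff_tendsto_slope.mp hg
  have H := Hf.div Hg hg'
  have hfa : Real.sin (a * h * N) * Real.sin (a * h / 2) = 0 := by
    rw [hahN, Real.sin_nat_mul_pi, zero_mul]
  have hga : Real.cos ((k:ℝ) * π / N) - Real.cos (a * h) = 0 := by
    rw [hah, sub_self]
  have key : Filter.Tendsto
      (fun φ : ℝ => Real.sin (φ * h * N) * Real.sin (φ * h / 2) /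
        (Real.cos ((k:ℝ) * π / N) - Real.cos (φ * h)))
      (𝓝[≠] a)
      (𝓝 ((-1)^k * (h * N) * Real.sin ((k:ℝ) * π / (2 * N)) /
        (Real.sin ((k:ℝ) * π / N) * h))) := by
    refine H.congr' ?_
    filter_upwards [self_mem_nhdsWithin] with x hx
    have hxa : x - a ≠ 0 := sub_ne_zero.mpr hx
    simp only [Pi.div_apply]
    rw [slope_def_field, slope_def_field, hfa, hga, sub_zero, sub_zero,
      div_div_div_cancel_right₀ hxa]
  convert key using 2
  have hsin2 : Real.sin ((k:ℝ) * π / N) =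
      2 * Real.sin ((k:ℝ) * π / (2 * N)) * Real.cos ((k:ℝ) * π / (2 * N)) := by
    have : (k:ℝ) * π / N = 2 * ((k:ℝ) * π / (2 * N)) := by field_simp
    rw [this, Real.sin_two_mul]
  rw [hsin2]
  have hs0 : Real.sin ((k:ℝ) * π / (N * 2)) ≠ 0 := by rw [mul_comm (N:ℝ)]; exact hsind.ne'
  field_simp
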